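/- Let $R$ be a commutative Noetherian local ring with maximal ideal $\mathfrak{m}$, $I, J$ ideals, and $M$ an Artinian $R$-module. If $M$ is $I$-separated, i.e. $\bigcap_{t>0} I^t M = 0$, then there exists a positive integer $n$ with $I^n M = 0$, and consequently $\mathfrak{F}^I_{i,J}(M) \cong H^J_i(M)$ for all $i$. -/

import Mathlib

open CategoryTheory CategoryTheory.Limits

noncomputable section

namespace FLH

variable (R : Type) [CommRing R]

/-- The inverse system `… → R/J^{t+1} → R/J^t → …` over `ℕᵒᵖ`. -/
def quotPowDiagram (J : Ideal R) : ℕᵒᵖ ⥤ ModuleCat R :=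
  Functor.ofOpSequence
    (X := fun t => ModuleCat.of R (R ⧸ (J ^ t : Ideal R)))
    fun t => ModuleCat.ofHom
      (Submodule.mapQ (J ^ (t + 1)) (J ^ t) LinearMap.id
        (fun _ hx => Ideal.pow_le_pow_right (Nat.le_succ t) hx))

/-- The `i`-th local homology functor `H^J_i(-) = lim_t Tor_i(R/J^t, -)`. -/
def localHomologyFunctor (J : Ideal R) (i : ℕ) : ModuleCat R ⥤ ModuleCat R :=
  (Tor (ModuleCat R) i).flip ⋙
    (Functor.whiskeringLeft ℕᵒᵖ (ModuleCat R) (ModuleCat R)).obj (quotPowDiagram R J) ⋙ lim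

/-- The direct system `0 :_M I ⊆ 0 :_M I² ⊆ …` over `ℕ`. -/
def torsionDiagram (I : Ideal R) (M : Type) [AddCommGroup M] [Module R M] :
    ℕ ⥤ ModuleCat R :=
  Functor.ofSequence
    (X := fun t => ModuleCat.of R (Submodule.torsionBySet R M ((I ^ t : Ideal R) : Set R)))
    fun t => ModuleCat.ofHom
      (Submodule.inclusion (Submodule.torsionBySet_le_torsionBySet_of_subset
        (fun _ hx => Ideal.pow_le_pow_right (Nat.le_succ t) hx)))

/-- The `i`-th `I`-formal local homology module of `M` with respect to `J`:
`𝔉^I_{i,J}(M) = colim_t H^J_i(0 :_M I^t)`. -/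
def formalLocalHomology (I J : Ideal R) (i : ℕ) (M : Type) [AddCommGroup M] [Module R M] :
    ModuleCat R :=
  colimit (torsionDiagram R I M ⋙ localHomologyFunctor R J i)

end FLH

namespace FLHAux

open FLH

/-- Colimit of a constant functor over `ℕ`. -/
noncomputable def colimitConstIsoNat {C : Type*} [Category C] (X : C)
    [HasColimit ((Functor.const ℕ).obj X)] : colimit ((Functor.const ℕ).obj X) ≅ X :=
  colimit.isoColimitCocone
    ⟨{ pt := X, ι := { app := fun _ => 𝟙 X, naturality := by intros; simp } },
     { desc := fun s => s.ι.app 0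
       fac := fun s j => by
         have h := s.ι.naturality (homOfLE (Nat.zero_le j))
         simpa using h.symm
       uniq := fun s m h => by simpa using h 0 }⟩

/-- The shift functor `t ↦ t + n` on `ℕ`. -/
def shiftFunctor (n : ℕ) : ℕ ⥤ ℕ :=
  Monotone.functor (f := fun t => t + n) (fun _ _ h => Nat.add_le_add_right h n)

instance shiftFinal (n : ℕ) : (shiftFunctor n).Final := by
  apply Functor.final_of_exists_of_isFiltered
  · intro d
    exact ⟨d, ⟨homOfLE (Nat.le_add_right d n)⟩⟩
  · intro d c s s'
    exact ⟨c, 𝟙 c, by congr 1; exact Subsingleton.elim s s'⟩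

variable (R : Type) [CommRing R] (I : Ideal R) (M : Type) [AddCommGroup M] [Module R M]

lemma torsionDiagram_map_val {a b : ℕ} (h : a ≤ b)
    (x : (torsionDiagram R I M).obj a) :
    (((torsionDiagram R I M).map (homOfLE h)) x).val = x.val := by
  induction b, h using Nat.le_induction with
  | base =>
      have : homOfLE (le_refl a) = 𝟙 a := rfl
      rw [this, CategoryTheory.Functor.map_id]
      rfl
  | succ b hb ih =>
      have : homOfLE (show a ≤ b + 1 by omega) =
          homOfLE hb ≫ homOfLE (Nat.le_add_right b 1) := rfl
      rw [this, Functor.map_comp]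
      have h2 : (torsionDiagram R I M).map (homOfLE (Nat.le_add_right b 1)) =
          ModuleCat.ofHom (Submodule.inclusion (Submodule.torsionBySet_le_torsionBySet_of_subset
            (fun _ hx => Ideal.pow_le_pow_right (Nat.le_succ b) hx))) :=
        Functor.ofSequence_map_homOfLE_succ _ b
      rw [h2]
      exact ih

end FLHAux


/-- If `M` is Artinian and `I`-separated, then some power of `I` kills `M`, and
`𝔉^I_{i,J}(M) ≅ H^J_i(M)` for all `i`. -/
theorem formalLocalHomology_of_separated (R : Type) [CommRing R] [IsNoetherianRing R]
    [IsLocalRing R] (I J : Ideal R) (M : Type) [AddCommGroup M] [Module R M] [IsArtinian R M]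
    (hsep : (⨅ t : ℕ, ((I ^ (t + 1) : Ideal R) • (⊤ : Submodule R M))) = ⊥) :
    (∃ n : ℕ, 0 < n ∧ (I ^ n : Ideal R) • (⊤ : Submodule R M) = ⊥) ∧
    ∀ i : ℕ, Nonempty (FLH.formalLocalHomology R I J i M ≅
      (FLH.localHomologyFunctor R J i).obj (ModuleCat.of R M)) := by
  classical
  open CategoryTheory CategoryTheory.Limits FLHAux in
  -- Part 1: some power of `I` kills `M`.
  obtain ⟨k, hk⟩ := IsArtinian.monotone_stabilizes (R := R) (M := M)
    ⟨fun t => OrderDual.toDual ((I ^ (t + 1) : Ideal R) • (⊤ : Submodule R M)),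
     fun a b hab => OrderDual.toDual_le_toDual.mpr
       (Submodule.smul_mono_left (Ideal.pow_le_pow_right (by omega)))⟩
  set n := k + 1 with hn_def
  have hn : (I ^ n : Ideal R) • (⊤ : Submodule R M) = ⊥ := by
    have heq : (I ^ n : Ideal R) • (⊤ : Submodule R M) =
        ⨅ t : ℕ, ((I ^ (t + 1) : Ideal R) • (⊤ : Submodule R M)) := by
      refine le_antisymm (le_iInf fun m => ?_) (iInf_le _ k)
      rcases le_total k m with h | h
      · exact le_of_eq (congrArg OrderDual.ofDual (hk m h))
      · exact Submodule.smul_mono_left (Ideal.pow_le_pow_right (by omega))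
    rw [heq, hsep]
  refine ⟨⟨n, Nat.succ_pos k, hn⟩, fun i => ?_⟩
  -- Part 2.
  have htop : ∀ t : ℕ,
      Submodule.torsionBySet R M (((I ^ (t + n) : Ideal R) : Set R)) = ⊤ := by
    intro t
    rw [eq_top_iff]
    intro x _
    rw [Submodule.mem_torsionBySet_iff]
    rintro ⟨a, ha⟩
    have : a • x ∈ (I ^ n : Ideal R) • (⊤ : Submodule R M) :=
      Submodule.smul_mem_smul (Ideal.pow_le_pow_right (Nat.le_add_left n t) ha)
        Submodule.mem_top
    rw [hn] at this
    simpa using this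
  set D := FLH.torsionDiagram R I M with hD
  set F := FLH.localHomologyFunctor R J i with hF
  -- natural transformation from the shifted diagram to the constant diagram at `M`
  let α : shiftFunctor n ⋙ D ⟶ (Functor.const ℕ).obj (ModuleCat.of R M) :=
    NatTrans.ofSequence
      (F := shiftFunctor n ⋙ D) (G := (Functor.const ℕ).obj (ModuleCat.of R M))
      (fun t => ModuleCat.ofHom
        (Submodule.subtype (Submodule.torsionBySet R M (((I ^ (t + n) : Ideal R) : Set R)))))
      (by
        intro t
        ext x
        exact torsionDiagram_map_val R I M (show t + n ≤ t + 1 + n by omega) x)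
  have hiso : ∀ t : ℕ, IsIso (α.app t) := by
    intro t
    rw [ConcreteCategory.isIso_iff_bijective]
    constructor
    · exact Subtype.val_injective
    · intro x
      exact ⟨⟨x, (htop t).symm ▸ Submodule.mem_top⟩, rfl⟩
  have : IsIso α := NatIso.isIso_of_isIso_app α
  exact ⟨(Functor.Final.colimitIso (shiftFunctor n) (D ⋙ F)).symm ≪≫
    HasColimit.isoOfNatIso (Functor.isoWhiskerRight (asIso α) F ≪≫ Functor.constComp ℕ _ F) ≪≫
    colimitConstIsoNat (F.obj (ModuleCat.of R M))⟩
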